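/- Let P be a potential graph with barrier digraph V, let t ∈ S ⊊ N with T_S ≠ ∅, and let (a,b) be an edge of P with a ∈ S, b ∉ S realizing p_{ab} = min { p_{qr} : q ∈ S, r ∉ S, (q,r) an edge of P }. Then λ°_S = λ^{•t}_S − p_{tt} + p_{ab}. -/

import Mathlib

open scoped Classical

namespace BarrierForests

variable {α : Type*} [Fintype α] [DecidableEq α]

/-- Total weight of a set of arcs. -/
def aweight (v : α → α → ℝ) (A : Finset (α × α)) : ℝ := ∑ a ∈ A, v a.1 a.2

/-- Weight `Υ^A_S` of the arcs of `A` whose tail lies in `S`. -/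
def aweightOn (v : α → α → ℝ) (A : Finset (α × α)) (S : Finset α) : ℝ :=
  ∑ a ∈ A.filter (fun a => a.1 ∈ S), v a.1 a.2

/-- The relation "there is an arc from `i` to `j` in `A`". -/
def arcRel (A : Finset (α × α)) : α → α → Prop := fun i j => (i, j) ∈ A

/-- Entering forest: every vertex has out-degree at most one, and there are no
directed cycles. -/
def IsEForest (A : Finset (α × α)) : Prop :=
  (∀ i j j', (i, j) ∈ A → (i, j') ∈ A → j = j') ∧
  ∀ i, ¬ Relation.TransGen (arcRel A) i i

/-- Roots of a (spanning) entering forest: the vertices with no outgoing arc. -/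
noncomputable def rootSet (A : Finset (α × α)) : Finset α :=
  Finset.univ.filter fun i => ∀ j, (i, j) ∉ A

/-- `𝓕^k`: spanning entering forests of the digraph with arc set `E`
having exactly `k` trees (equivalently, `k` roots). -/
def FSet (E : Finset (α × α)) (k : ℕ) : Set (Finset (α × α)) :=
  {A | A ⊆ E ∧ IsEForest A ∧ (rootSet A).card = k}

/-- The infimum (in `EReal`, so `⊤` for the empty family) of the `w`-weights of the
members of `s`. -/
noncomputable def minW {β : Type*} (s : Set β) (w : β → ℝ) : EReal :=
  sInf ((fun x => (w x : EReal)) '' s)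

/-- `φ^k`: minimum weight of a spanning entering forest with `k` trees. -/
noncomputable def phi (v : α → α → ℝ) (E : Finset (α × α)) (k : ℕ) : EReal :=
  minW (FSet E k) (aweight v)

/-- `F ∈ 𝓕̃^k`: minimal spanning entering forest with `k` trees. -/
def IsMinForest (v : α → α → ℝ) (E : Finset (α × α)) (k : ℕ) (F : Finset (α × α)) : Prop :=
  F ∈ FSet E k ∧ (aweight v F : EReal) = phi v E k

/-- Vertex set of the tree `T^F_i` of the entering forest `F` rooted at `i`:
all vertices from which `i` is reachable. -/
noncomputable def treeVerts (F : Finset (α × α)) (i : α) : Finset α :=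
  Finset.univ.filter fun j => Relation.ReflTransGen (arcRel F) j i

/-- Arc set of the tree `T^F_i`. -/
noncomputable def treeArcs (F : Finset (α × α)) (i : α) : Finset (α × α) :=
  F.filter fun a => a.1 ∈ treeVerts F i

/-- Induced subgraph (restriction) of the arc set `A` on the vertex set `S`. -/
def restrictArcs (A : Finset (α × α)) (S : Finset α) : Finset (α × α) :=
  A.filter fun a => a.1 ∈ S ∧ a.2 ∈ S

/-- `T ∈ 𝓣^{•q}_S`: `T` is an entering tree that is a subgraph of the digraph with
arc set `E`, with vertex set `S` and root `q`. -/
def IsTreeOn (E T : Finset (α × α)) (S : Finset α) (q : α) : Prop :=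
  q ∈ S ∧ T ⊆ E ∧ (∀ a ∈ T, a.1 ∈ S ∧ a.2 ∈ S) ∧
  (∀ i ∈ S, i ≠ q → ∃! j, (i, j) ∈ T) ∧
  (∀ j, (q, j) ∉ T) ∧
  ∀ i ∈ S, Relation.ReflTransGen (arcRel T) i q

/-- `λ^{•q}_S`. -/
noncomputable def lamB (v : α → α → ℝ) (E : Finset (α × α)) (S : Finset α) (q : α) : EReal :=
  minW {T | IsTreeOn E T S q} (aweight v)

/-- `λ^•_S = min_{q ∈ S} λ^{•q}_S`. -/
noncomputable def lamBul (v : α → α → ℝ) (E : Finset (α × α)) (S : Finset α) : EReal :=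
  minW {T | ∃ q ∈ S, IsTreeOn E T S q} (aweight v)

/-- `T ∈ 𝓣^{∘q}_S`: `T` has `|S| + 1` vertices, `T|_S` is an entering tree with vertex
set `S` and root `q`, and the single arc of `T` leaving `S` goes from `q` to the root
`r ∉ S` of `T`. -/
def IsCTreeOn (E T : Finset (α × α)) (S : Finset α) (q : α) : Prop :=
  ∃ r, r ∉ S ∧ ∃ T', IsTreeOn E T' S q ∧ (q, r) ∈ E ∧ T = insert (q, r) T'

/-- `λ^{∘q}_S`. -/
noncomputable def lamC (v : α → α → ℝ) (E : Finset (α × α)) (S : Finset α) (q : α) : EReal :=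
  minW {T | IsCTreeOn E T S q} (aweight v)

/-- `λ^∘_S = min_{q ∈ S} λ^{∘q}_S`. -/
noncomputable def lamCirc (v : α → α → ℝ) (E : Finset (α × α)) (S : Finset α) : EReal :=
  minW {T | ∃ q ∈ S, IsCTreeOn E T S q} (aweight v)

/-- `μ^∘_S`: minimum of `Υ^F_S` over the spanning entering forests `F ∈ 𝓕^∘_S`,
i.e. those in which every vertex of `S` has an outgoing arc. -/
noncomputable def muCirc (v : α → α → ℝ) (E : Finset (α × α)) (S : Finset α) : EReal :=
  minW {A | A ⊆ E ∧ IsEForest A ∧ ∀ i ∈ S, ∃ j, (i, j) ∈ A} fun A => aweightOn v A S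

/-- `G ∈ 𝓡^F_y`: `G` is a descendant of `F` at the root `y`, i.e. `y` is a root of
`F`, the roots of `G` are those of `F` except `y`, `G` induces `T^F_q` on the vertex
set of every tree of `F` other than `T^F_y`, and `G` induces a tree on the vertex set
of `T^F_y`. -/
def IsDescendant (E F G : Finset (α × α)) (y : α) : Prop :=
  y ∈ rootSet F ∧ rootSet G = rootSet F \ {y} ∧
  (∀ q ∈ rootSet G, restrictArcs G (treeVerts F q) = treeArcs F q) ∧
  ∃ a ∈ treeVerts F y, IsTreeOn E (restrictArcs G (treeVerts F y)) (treeVerts F y) a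

/-- A potential graph: a connected weighted undirected graph with a loop at every
vertex.  Edges are recorded as a symmetric reflexive set of ordered pairs, with a
symmetric weight function `p`. -/
structure PotGraph (α : Type*) [Fintype α] [DecidableEq α] where
  p : α → α → ℝ
  edges : Finset (α × α)
  symm_mem : ∀ i j, (i, j) ∈ edges → (j, i) ∈ edges
  loop_mem : ∀ i, (i, i) ∈ edges
  symm_w : ∀ i j, p i j = p j i
  connected : ∀ i j : α, Relation.ReflTransGen (fun a b => (a, b) ∈ edges ∧ a ≠ b) i j

/-- Arc set of the barrier digraph of the potential graph `P`: an arc `(i,j)`, `i ≠ j`,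
for each non-loop edge of `P`. -/
def barcs (P : PotGraph α) : Finset (α × α) := P.edges.filter fun a => a.1 ≠ a.2

/-- Arc weights of the barrier digraph: `v i j = p i j - p i i`. -/
def bw (P : PotGraph α) : α → α → ℝ := fun i j => P.p i j - P.p i i

/-- Weight of a set of undirected edges of `P`. -/
noncomputable def uweight (P : PotGraph α) (T : Finset (Sym2 α)) : ℝ :=
  ∑ e ∈ T, Sym2.lift ⟨P.p, P.symm_w⟩ e

/-- `T ∈ 𝓣_S`: `T` is an undirected tree that is a subgraph of `P` (loops unused)
with vertex set `S`: its edges are non-loop edges of `P` joining vertices of `S`,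
it is connected on `S`, and it has `|S| - 1` edges. -/
def IsUTreeOn (P : PotGraph α) (T : Finset (Sym2 α)) (S : Finset α) : Prop :=
  (∀ e ∈ T, ∃ i j, i ≠ j ∧ e = s(i, j) ∧ (i, j) ∈ P.edges ∧ i ∈ S ∧ j ∈ S) ∧
  (∀ i ∈ S, ∀ j ∈ S, Relation.ReflTransGen (fun a b => s(a, b) ∈ T) i j) ∧
  T.card + 1 = S.card

/-- `ν_S`: minimum weight of an undirected tree on `S` that is a subgraph of `P`. -/
noncomputable def nu (P : PotGraph α) (S : Finset α) : EReal :=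
  minW {T | IsUTreeOn P T S} (uweight P)

/-- The underlying undirected edge set of a set of arcs. -/
def undir (A : Finset (α × α)) : Finset (Sym2 α) := A.image fun a => s(a.1, a.2)

/-- `Tq` is the entering tree (with root `q`, vertex set `S`, subgraph of the barrier
digraph of `P`) corresponding to the undirected tree `T`: it is obtained from `T` by
directing all edges toward `q` and replacing the weight of each arc `(i,j)` by
`v i j = p i j - p i i`. -/
def Corresponds (P : PotGraph α) (Tq : Finset (α × α)) (T : Finset (Sym2 α))
    (S : Finset α) (q : α) : Prop :=
  IsTreeOn (barcs P) Tq S q ∧ undir Tq = T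

section Aux

open Relation

variable {E T : Finset (α × α)} {S : Finset α} {q t : α}

lemma tree_out_unique (h : IsTreeOn E T S q) {i j j' : α}
    (hj : (i, j) ∈ T) (hj' : (i, j') ∈ T) : j = j' := by
  obtain ⟨hq, hTE, hmem, huniq, hroot, hreach⟩ := h
  have hiS : i ∈ S := (hmem _ hj).1
  by_cases hiq : i = q
  · exact absurd (hiq ▸ hj) (hroot j)
  · obtain ⟨w, _, hu⟩ := huniq i hiS hiq
    rw [hu j hj, hu j' hj']

lemma tree_acyclic (h : IsTreeOn E T S q) (i : α) :
    ¬ TransGen (arcRel T) i i := by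
  have key : ∀ x, ReflTransGen (arcRel T) x q → ¬ TransGen (arcRel T) x x := by
    intro x hx
    induction hx using Relation.ReflTransGen.head_induction_on with
    | refl =>
      intro hc
      obtain ⟨w, hw, _⟩ := Relation.TransGen.head'_iff.mp hc
      exact h.2.2.2.2.1 w hw
    | @head u c harc hrest ih =>
      intro hc
      obtain ⟨w, hw, hw2⟩ := Relation.TransGen.head'_iff.mp hc
      have hwc : w = c := tree_out_unique h hw harc
      subst hwc
      exact ih (Relation.TransGen.tail' hw2 harc)
  intro hc
  obtain ⟨w, hw, _⟩ := Relation.TransGen.head'_iff.mp hc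
  have hiS : i ∈ S := (h.2.2.1 _ hw).1
  exact key i (h.2.2.2.2.2 i hiS) hc

lemma tree_comparable (h : IsTreeOn E T S q) {x y z : α}
    (hxy : ReflTransGen (arcRel T) x y) (hxz : ReflTransGen (arcRel T) x z) :
    ReflTransGen (arcRel T) y z ∨ ReflTransGen (arcRel T) z y := by
  induction hxy with
  | refl => exact Or.inl hxz
  | @tail b c h1 harc ih =>
    rcases ih with h2 | h2
    · rcases h2.cases_head with rfl | ⟨w, hw, hw2⟩
      · exact Or.inr (ReflTransGen.single harc)
      · left
        rwa [tree_out_unique h hw harc] at hw2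
    · exact Or.inr (h2.tail harc)

lemma tree_pred_unique (h : IsTreeOn E T S q) {i x x' : α}
    (hx : ReflTransGen (arcRel T) t x) (ha : (x, i) ∈ T)
    (hx' : ReflTransGen (arcRel T) t x') (ha' : (x', i) ∈ T) : x = x' := by
  have aux : ∀ u u' : α, ReflTransGen (arcRel T) u u' → (u, i) ∈ T → (u', i) ∈ T → u = u' := by
    intro u u' huu hui hui'
    rcases huu.cases_head with rfl | ⟨w, hw, hw2⟩
    · rfl
    · exfalso
      have hwi : w = i := tree_out_unique h hw hui
      rw [hwi] at hw2
      exact tree_acyclic h i (Relation.TransGen.tail' hw2 hui')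
  rcases tree_comparable h hx hx' with h1 | h1
  · exact aux _ _ h1 ha ha'
  · exact (aux _ _ h1 ha' ha).symm

/-- Rerooting an entering tree at `t`: reverse all arcs on the path from `t`
to the old root. -/
noncomputable def reroot (T : Finset (α × α)) (t : α) : Finset (α × α) :=
  T.image fun a => if Relation.ReflTransGen (arcRel T) t a.1 then a.swap else a

lemma mem_reroot {x y : α} :
    (x, y) ∈ reroot T t ↔ ((x, y) ∈ T ∧ ¬ ReflTransGen (arcRel T) t x) ∨
      ((y, x) ∈ T ∧ ReflTransGen (arcRel T) t y) := by
  simp only [reroot, Finset.mem_image]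
  constructor
  · rintro ⟨⟨u, w⟩, hmem, heq⟩
    by_cases hr : ReflTransGen (arcRel T) t u
    · rw [if_pos hr] at heq
      have h1 : w = x := congrArg Prod.fst heq
      have h2 : u = y := congrArg Prod.snd heq
      subst h1; subst h2
      exact Or.inr ⟨hmem, hr⟩
    · rw [if_neg hr] at heq
      have h1 : u = x := congrArg Prod.fst heq
      have h2 : w = y := congrArg Prod.snd heq
      subst h1; subst h2
      exact Or.inl ⟨hmem, hr⟩
  · rintro (⟨h1, h2⟩ | ⟨h1, h2⟩)
    · exact ⟨(x, y), h1, by simp [h2]⟩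
    · exact ⟨(y, x), h1, by simp [h2]⟩

lemma reroot_isTreeOn (hsymm : ∀ x y, (x, y) ∈ E → (y, x) ∈ E)
    (h : IsTreeOn E T S q) (ht : t ∈ S) : IsTreeOn E (reroot T t) S t := by
  obtain ⟨hq, hTE, hmemS, huniq, hroot, hreach⟩ := h
  have h' : IsTreeOn E T S q := ⟨hq, hTE, hmemS, huniq, hroot, hreach⟩
  have hRtq : ReflTransGen (arcRel T) t q := hreach t ht
  refine ⟨ht, ?_, ?_, ?_, ?_, ?_⟩
  · rintro ⟨x, y⟩ hxy
    rcases mem_reroot.mp hxy with ⟨h1, _⟩ | ⟨h1, _⟩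
    · exact hTE h1
    · exact hsymm _ _ (hTE h1)
  · rintro ⟨x, y⟩ hxy
    rcases mem_reroot.mp hxy with ⟨h1, _⟩ | ⟨h1, _⟩
    · exact hmemS _ h1
    · exact ⟨(hmemS _ h1).2, (hmemS _ h1).1⟩
  · intro i hiS hit
    by_cases hr : ReflTransGen (arcRel T) t i
    · rcases hr.cases_tail with h1 | ⟨x, hx1, hx2⟩
      · exact absurd h1 hit
      · refine ⟨x, mem_reroot.mpr (Or.inr ⟨hx2, hx1⟩), ?_⟩
        intro j hj
        rcases mem_reroot.mp hj with ⟨_, h2⟩ | ⟨h1, h2⟩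
        · exact absurd hr h2
        · exact tree_pred_unique h' h2 h1 hx1 hx2
    · have hiq : i ≠ q := fun e => hr (e ▸ hRtq)
      obtain ⟨j, hj, _⟩ := huniq i hiS hiq
      refine ⟨j, mem_reroot.mpr (Or.inl ⟨hj, hr⟩), ?_⟩
      intro j' hj'
      rcases mem_reroot.mp hj' with ⟨h1, _⟩ | ⟨h1, h2⟩
      · exact tree_out_unique h' h1 hj
      · exact absurd (h2.tail h1) hr
  · intro j hj
    rcases mem_reroot.mp hj with ⟨_, h2⟩ | ⟨h1, h2⟩
    · exact h2 ReflTransGen.refl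
    · exact tree_acyclic h' t (Relation.TransGen.tail' h2 h1)
  · have R1 : ∀ x, ReflTransGen (arcRel T) t x →
        ReflTransGen (arcRel (reroot T t)) x t := by
      intro x hx
      induction hx with
      | refl => exact ReflTransGen.refl
      | @tail b c hpre harc ih =>
        exact ReflTransGen.head
          (show arcRel (reroot T t) c b from mem_reroot.mpr (Or.inr ⟨harc, hpre⟩)) ih
    have R2 : ∀ i, ReflTransGen (arcRel T) i q →
        ReflTransGen (arcRel (reroot T t)) i t := by
      intro i hi
      induction hi using Relation.ReflTransGen.head_induction_on with
      | refl => exact R1 q hRtq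
      | @head u c harc hrest ih =>
        by_cases hr : ReflTransGen (arcRel T) t u
        · exact R1 u hr
        · exact ReflTransGen.head
            (show arcRel (reroot T t) u c from mem_reroot.mpr (Or.inl ⟨harc, hr⟩)) ih
    exact fun i hiS => R2 i (hreach i hiS)

lemma tree_sum_tail (h : IsTreeOn E T S q) (f : α → ℝ) :
    ∑ a ∈ T, f a.1 = ∑ i ∈ S.erase q, f i := by
  refine Finset.sum_bij (fun a _ => a.1) ?_ ?_ ?_ ?_
  · intro a ha
    refine Finset.mem_erase.mpr ⟨?_, (h.2.2.1 a (by simpa using ha)).1⟩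
    intro he
    exact h.2.2.2.2.1 a.2 (by rw [← he]; simpa using ha)
  · intro a ha a' ha' he
    have he' : a.1 = a'.1 := he
    have ha2 : (a.1, a.2) ∈ T := by simpa using ha
    have ha2' : (a.1, a'.2) ∈ T := by rw [he']; simpa using ha'
    exact Prod.ext he' (tree_out_unique h ha2 ha2')
  · intro i hi
    obtain ⟨hiq, hiS⟩ := Finset.mem_erase.mp hi
    obtain ⟨j, hj, _⟩ := h.2.2.2.1 i hiS hiq
    exact ⟨(i, j), hj, rfl⟩
  · intro a _; rfl

lemma aweight_tree (P : PotGraph α) (h : IsTreeOn (barcs P) T S q) :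
    aweight (bw P) T = (∑ a ∈ T, P.p a.1 a.2) - ∑ i ∈ S.erase q, P.p i i := by
  unfold aweight bw
  rw [← tree_sum_tail h (fun i => P.p i i), ← Finset.sum_sub_distrib]

lemma reroot_sum_p (P : PotGraph α) (T : Finset (α × α)) (t : α) :
    ∑ a ∈ reroot T t, P.p a.1 a.2 = ∑ a ∈ T, P.p a.1 a.2 := by
  unfold reroot
  rw [Finset.sum_image]
  · refine Finset.sum_congr rfl ?_
    intro a _
    by_cases hr : ReflTransGen (arcRel T) t a.1
    · rw [if_pos hr]; exact P.symm_w a.2 a.1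
    · rw [if_neg hr]
  · intro x hx y hy heq
    beta_reduce at heq
    by_cases hrx : ReflTransGen (arcRel T) t x.1 <;>
      by_cases hry : ReflTransGen (arcRel T) t y.1
    · rw [if_pos hrx, if_pos hry] at heq
      exact Prod.swap_injective heq
    · rw [if_pos hrx, if_neg hry] at heq
      exfalso
      apply hry
      have h1 : y.1 = x.2 := by rw [← heq]; rfl
      rw [h1]
      exact hrx.tail (show arcRel T x.1 x.2 from by simpa [arcRel] using hx)
    · rw [if_neg hrx, if_pos hry] at heq
      exfalso
      apply hrx
      have h1 : x.1 = y.2 := by rw [heq]; rfl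
      rw [h1]
      exact hry.tail (show arcRel T y.1 y.2 from by simpa [arcRel] using hy)
    · rw [if_neg hrx, if_neg hry] at heq; exact heq

lemma reroot_aweight (P : PotGraph α)
    (hsymm : ∀ x y, (x, y) ∈ barcs P → (y, x) ∈ barcs P)
    (h : IsTreeOn (barcs P) T S q) (ht : t ∈ S) :
    aweight (bw P) (reroot T t) = aweight (bw P) T - P.p q q + P.p t t := by
  have h2 := reroot_isTreeOn hsymm h ht
  rw [aweight_tree P h2, aweight_tree P h, reroot_sum_p,
    Finset.sum_erase_eq_sub ht, Finset.sum_erase_eq_sub h.1]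
  ring

lemma minW_le {β : Type*} {s : Set β} {w : β → ℝ} {x : β} (hx : x ∈ s) :
    minW s w ≤ (w x : EReal) :=
  sInf_le ⟨x, hx, rfl⟩

lemma le_minW {β : Type*} {s : Set β} {w : β → ℝ} {c : EReal}
    (h : ∀ x ∈ s, c ≤ (w x : EReal)) : c ≤ minW s w :=
  le_sInf (by rintro _ ⟨x, hx, rfl⟩; exact h x hx)

lemma minW_empty {β : Type*} {w : β → ℝ} : minW (∅ : Set β) w = ⊤ := by
  simp [minW]

lemma minW_attained {β : Type*} {s : Set β} (hs : s.Finite) (hne : s.Nonempty)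
    (w : β → ℝ) : ∃ x ∈ s, minW s w = (w x : EReal) := by
  obtain ⟨x, hx, hmin⟩ := Set.exists_min_image s w hs hne
  refine ⟨x, hx, le_antisymm (minW_le hx) (le_minW ?_)⟩
  intro y hy
  exact_mod_cast hmin y hy

lemma barcs_symm (P : PotGraph α) : ∀ x y, (x, y) ∈ barcs P → (y, x) ∈ barcs P := by
  intro x y hxy
  obtain ⟨h1, h2⟩ := Finset.mem_filter.mp hxy
  exact Finset.mem_filter.mpr ⟨P.symm_mem _ _ h1, fun e => h2 e.symm⟩

end Aux

/-- Assertion 8.  If `t ∈ S ⊊ N`, `𝓣_S ≠ ∅`, and `(a,b)` is an edge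
of `P` with `a ∈ S`, `b ∉ S` realizing the minimum of `p q r` over edges from `S` to
its complement, then `λ^∘_S = λ^{•t}_S - p t t + p a b`. -/
theorem statement15 (P : PotGraph α) (S : Finset α) (hS : S ⊂ Finset.univ)
    (t : α) (ht : t ∈ S) (hne : ∃ T, IsUTreeOn P T S)
    (a b : α) (ha : a ∈ S) (hb : b ∉ S) (hab : (a, b) ∈ P.edges)
    (hmin : ∀ q ∈ S, ∀ r, r ∉ S → (q, r) ∈ P.edges → P.p a b ≤ P.p q r) :
    lamCirc (bw P) (barcs P) S =
      lamB (bw P) (barcs P) S t - ((P.p t t : ℝ) : EReal) + ((P.p a b : ℝ) : EReal) := by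
  have hsymm := barcs_symm P
  have hab' : a ≠ b := fun e => hb (e ▸ ha)
  have habE : (a, b) ∈ barcs P := Finset.mem_filter.mpr ⟨hab, hab'⟩
  by_cases hT : ∃ T0, IsTreeOn (barcs P) T0 S t
  · obtain ⟨T0, hT0⟩ := hT
    have hfin : ({T | IsTreeOn (barcs P) T S t}).Finite := by
      apply Set.Finite.subset ((barcs P).powerset.finite_toSet)
      intro T hT
      exact Finset.mem_coe.mpr (Finset.mem_powerset.mpr hT.2.1)
    obtain ⟨Tm, hTm, hTmeq⟩ := minW_attained hfin ⟨T0, hT0⟩ (aweight (bw P))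
    set c := aweight (bw P) Tm with hc
    have hlamB : lamB (bw P) (barcs P) S t = ((c : ℝ) : EReal) := hTmeq
    have key : lamCirc (bw P) (barcs P) S = ((c - P.p t t + P.p a b : ℝ) : EReal) := by
      apply le_antisymm
      · have hT' : IsTreeOn (barcs P) (reroot Tm a) S a := reroot_isTreeOn hsymm hTm ha
        have hw' : aweight (bw P) (reroot Tm a) = c - P.p t t + P.p a a := by
          rw [reroot_aweight P hsymm hTm ha]
        have habT' : (a, b) ∉ reroot Tm a := fun hmem => hb ((hT'.2.2.1 _ hmem).2)
        have hcand : (insert (a, b) (reroot Tm a)) ∈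
            {T | ∃ q ∈ S, IsCTreeOn (barcs P) T S q} :=
          ⟨a, ha, b, hb, reroot Tm a, hT', habE, rfl⟩
        refine le_trans (minW_le hcand) ?_
        apply EReal.coe_le_coe_iff.mpr
        rw [aweight, Finset.sum_insert habT']
        have : ∑ x ∈ reroot Tm a, bw P x.1 x.2 = c - P.p t t + P.p a a := hw'
        rw [this]
        simp only [bw]
        linarith
      · apply le_minW
        rintro T ⟨q, hqS, r, hr, T', hT'q, hqrE, rfl⟩
        have hqr_edge : (q, r) ∈ P.edges := (Finset.mem_filter.mp hqrE).1
        have hmin' : P.p a b ≤ P.p q r := hmin q hqS r hr hqr_edge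
        have hre : IsTreeOn (barcs P) (reroot T' t) S t := reroot_isTreeOn hsymm hT'q ht
        have h1 : c ≤ aweight (bw P) (reroot T' t) := by
          have h2 : lamB (bw P) (barcs P) S t ≤
              ((aweight (bw P) (reroot T' t) : ℝ) : EReal) := minW_le hre
          rw [hlamB] at h2
          exact_mod_cast h2
        have hw : aweight (bw P) (reroot T' t) = aweight (bw P) T' - P.p q q + P.p t t :=
          reroot_aweight P hsymm hT'q ht
        have hqrT' : (q, r) ∉ T' := fun hm => hr (hT'q.2.2.1 _ hm).2
        apply EReal.coe_le_coe_iff.mpr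
        rw [aweight, Finset.sum_insert hqrT']
        have h3 : ∑ x ∈ T', bw P x.1 x.2 = aweight (bw P) T' := rfl
        rw [h3]
        simp only [bw]
        nlinarith [h1, hw, hmin']
    rw [key, hlamB, ← EReal.coe_sub, ← EReal.coe_add]
  · have hB : lamB (bw P) (barcs P) S t = ⊤ := by
      have he : {T | IsTreeOn (barcs P) T S t} = (∅ : Set (Finset (α × α))) := by
        ext T
        simp only [Set.mem_setOf_eq, Set.mem_empty_iff_false, iff_false]
        exact fun h => hT ⟨T, h⟩
      rw [lamB, he, minW_empty]
    have hC : lamCirc (bw P) (barcs P) S = ⊤ := by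
      have he : {T | ∃ q ∈ S, IsCTreeOn (barcs P) T S q} = (∅ : Set (Finset (α × α))) := by
        ext T
        simp only [Set.mem_setOf_eq, Set.mem_empty_iff_false, iff_false]
        rintro ⟨q, hqS, r, hr, T', hT', _, _⟩
        exact hT ⟨reroot T' t, reroot_isTreeOn hsymm hT' ht⟩
      rw [lamCirc, he, minW_empty]
    rw [hB, hC, EReal.top_sub_coe, EReal.top_add_coe]

end BarrierForests
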